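/- If A is a complex number and d = -A^2 - A^{-2}, then the map ρ_A sending the braid generator σ_i to A·E_i + A^{-1}·1 in the Temperley-Lieb algebra TL_n(d) respects the braid relation: ρ_A(σ_i)ρ_A(σ_{i+1})ρ_A(σ_i) = ρ_A(σ_{i+1})ρ_A(σ_i)ρ_A(σ_{i+1}). -/
import Mathlib


/-- In the Temperley-Lieb algebra `TL_n(d)` (formalized as any complex
algebra containing elements `E 1, ..., E (n-1)` satisfying the Temperley-Lieb
relations), if `d = -A^2 - A^{-2}`, then `ρ_A(σ_i) = A•E_i + A⁻¹•1` satisfies the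
braid relation `ρ_A(σ_i) ρ_A(σ_{i+1}) ρ_A(σ_i) = ρ_A(σ_{i+1}) ρ_A(σ_i) ρ_A(σ_{i+1})`. -/
theorem braid_relation_of_TL
    {R : Type*} [Ring R] [Algebra ℂ R] (n : ℕ) (A d : ℂ) (hA : A ≠ 0)
    (hd : d = -A ^ 2 - (A ^ 2)⁻¹)
    (E : ℕ → R)
    (hcomm : ∀ i j, 1 ≤ i → i ≤ n - 1 → 1 ≤ j → j ≤ n - 1 →
      (i + 2 ≤ j ∨ j + 2 ≤ i) → E i * E j = E j * E i)
    (hEiE : ∀ i, 1 ≤ i → i + 1 ≤ n - 1 → E i * E (i + 1) * E i = E i)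
    (hEiE' : ∀ i, 1 ≤ i → i + 1 ≤ n - 1 → E (i + 1) * E i * E (i + 1) = E (i + 1))
    (hsq : ∀ i, 1 ≤ i → i ≤ n - 1 → E i * E i = d • E i)
    (i : ℕ) (hi : 1 ≤ i) (hi' : i + 1 ≤ n - 1) :
    (A • E i + A⁻¹ • 1) * (A • E (i + 1) + A⁻¹ • 1) * (A • E i + A⁻¹ • 1) =
      (A • E (i + 1) + A⁻¹ • 1) * (A • E i + A⁻¹ • 1) * (A • E (i + 1) + A⁻¹ • 1) := by
  have hi1 : i ≤ n - 1 := le_trans (Nat.le_succ i) hi'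
  have hi2 : 1 ≤ i + 1 := le_trans hi (Nat.le_succ i)
  have hx := hsq i hi hi1
  have hy := hsq (i + 1) hi2 hi'
  have h1 := hEiE i hi hi'
  have h2 := hEiE' i hi hi'
  simp only [mul_add, add_mul, smul_mul_assoc, mul_smul_comm, smul_smul, one_mul, mul_one,
    ← mul_assoc] at *
  rw [hx, hy, h1, h2, hd]
  have hA2 : A ^ 2 ≠ 0 := pow_ne_zero 2 hA
  match_scalars
  all_goals field_simp
  all_goals try ring
  all_goals simp [← mul_pow, mul_inv_cancel₀ hA, eq_comm]
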